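/- The presented group ⟨σ, τ | τ² = 1, τ⁻¹στ = σ³⟩, on two generators σ, τ with relator set {τ², τ⁻¹·σ·τ·σ⁻³}, is isomorphic to the semidirect product (ℤ/8) ⋊ (ℤ/2), where the action is given by a homomorphism φ : ℤ/2 → Aut(ℤ/8) sending the generator 1 of ℤ/2 to the automorphism of ℤ/8 given by multiplication by 3. In particular this group is finite of cardinality 16. -/

import Mathlib

namespace Stmt11Aux

abbrev Nn := Multiplicative (ZMod 8)
abbrev Hh := Multiplicative (ZMod 2)

def m3add : ZMod 8 ≃+ ZMod 8 where
  toFun a := 3 * a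
  invFun a := 3 * a
  left_inv a := by show 3 * (3 * a) = a; rw [← mul_assoc, show (3*3 : ZMod 8) = 1 by decide, one_mul]
  right_inv a := by show 3 * (3 * a) = a; rw [← mul_assoc, show (3*3 : ZMod 8) = 1 by decide, one_mul]
  map_add' a b := mul_add 3 a b

def m3 : MulAut Nn := AddEquiv.toMultiplicative m3add

lemma m3_apply (a : ZMod 8) : m3 (Multiplicative.ofAdd a) = Multiplicative.ofAdd (3 * a) := rfl

lemma pow_mod {G : Type*} [Group G] {g : G} {n : ℕ} (h : g ^ n = 1) (k : ℕ) :
    g ^ (k % n) = g ^ k := by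
  conv_rhs => rw [← Nat.div_add_mod k n, pow_add, pow_mul, h, one_pow, one_mul]

def zmodHom {G : Type*} [Group G] (n : ℕ) [NeZero n] (g : G) (h : g ^ n = 1) :
    Multiplicative (ZMod n) →* G where
  toFun x := g ^ (Multiplicative.toAdd x).val
  map_one' := by simp
  map_mul' x y := by
    show g ^ (Multiplicative.toAdd x + Multiplicative.toAdd y).val = _
    rw [ZMod.val_add, pow_mod h, pow_add]

lemma zmodHom_apply {G : Type*} [Group G] (n : ℕ) [NeZero n] (g : G) (h : g ^ n = 1)
    (a : ZMod n) : zmodHom n g h (Multiplicative.ofAdd a) = g ^ a.val := rfl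

lemma zmod_hom_ext {n : ℕ} [NeZero n] {G : Type*} [Group G]
    {f g : Multiplicative (ZMod n) →* G}
    (h : f (Multiplicative.ofAdd 1) = g (Multiplicative.ofAdd 1)) : f = g := by
  refine MonoidHom.ext fun x => ?_
  have hx : x = (Multiplicative.ofAdd (1 : ZMod n)) ^ ZMod.val (n := n) (Multiplicative.toAdd x) := by
    rw [← ofAdd_nsmul, nsmul_eq_mul, mul_one, ZMod.natCast_val, ZMod.cast_id]
    rfl
  rw [hx, map_pow, map_pow, h]

lemma hm3 : m3 ^ 2 = 1 := by
  ext x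
  show m3 (m3 x) = x
  rw [show x = Multiplicative.ofAdd (Multiplicative.toAdd x) from rfl, m3_apply, m3_apply,
    ← mul_assoc, show (3*3 : ZMod 8) = 1 by decide, one_mul]

def φ : Multiplicative (ZMod 2) →* MulAut Nn := zmodHom 2 m3 hm3

lemma φ_one : φ (Multiplicative.ofAdd 1) = m3 := by
  rw [φ, zmodHom_apply]; norm_num [ZMod.val_one]


abbrev rels : Set (FreeGroup Bool) :=
  {FreeGroup.of false ^ 2,
    (FreeGroup.of false)⁻¹ * FreeGroup.of true * FreeGroup.of false *
      (FreeGroup.of true ^ 3)⁻¹}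

abbrev P := PresentedGroup rels

def σ : P := PresentedGroup.of true
def τ : P := PresentedGroup.of false

lemma rel_mem_one {r : FreeGroup Bool} (hr : r ∈ rels) : PresentedGroup.mk rels r = 1 :=
  (QuotientGroup.eq_one_iff _).2 (Subgroup.subset_normalClosure hr)

lemma hτ2 : τ ^ 2 = 1 := by
  have := rel_mem_one (r := FreeGroup.of false ^ 2) (Set.mem_insert _ _)
  rwa [map_pow] at this

lemma hconj : τ⁻¹ * σ * τ = σ ^ 3 := by
  have := rel_mem_one (r := (FreeGroup.of false)⁻¹ * FreeGroup.of true * FreeGroup.of false *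
      (FreeGroup.of true ^ 3)⁻¹) (Set.mem_insert_of_mem _ rfl)
  simp only [map_mul, map_inv, map_pow] at this
  rw [mul_inv_eq_one] at this
  exact this

lemma hτinv : τ⁻¹ = τ := by
  rw [← mul_one τ⁻¹, ← hτ2, pow_two, ← mul_assoc, inv_mul_cancel, one_mul]

lemma conj_pow'' {G : Type*} [Group G] (a x : G) (n : ℕ) : (a * x * a⁻¹) ^ n = a * x ^ n * a⁻¹ := by
  induction n with
  | zero => simp
  | succ n ih => rw [pow_succ, pow_succ, ih]; group

lemma hσ8 : σ ^ 8 = 1 := by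
  have e1 : σ = τ * σ ^ 3 * τ⁻¹ := by rw [← hconj]; group
  have e4 : σ = σ ^ 9 := by
    calc σ = τ * σ ^ 3 * τ⁻¹ := e1
    _ = τ * (τ * σ ^ 3 * τ⁻¹) ^ 3 * τ⁻¹ := by rw [← e1]; exact e1
    _ = τ * (τ * σ ^ 9 * τ⁻¹) * τ⁻¹ := by rw [conj_pow'', ← pow_mul]
    _ = τ ^ 2 * σ ^ 9 * (τ ^ 2)⁻¹ := by rw [pow_two, mul_inv_rev]; group
    _ = σ ^ 9 := by rw [hτ2]; group
  have : σ ^ 8 * σ = 1 * σ := by rw [one_mul, ← pow_succ, ← e4]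
  exact mul_right_cancel this


def fn : Nn →* P := zmodHom 8 σ hσ8
def fh : Hh →* P := zmodHom 2 τ hτ2

lemma fn_one : fn (Multiplicative.ofAdd 1) = σ := by
  rw [fn, zmodHom_apply, show ((1 : ZMod 8)).val = 1 from rfl, pow_one]

lemma fh_one : fh (Multiplicative.ofAdd 1) = τ := by
  rw [fh, zmodHom_apply, show ((1 : ZMod 2)).val = 1 from rfl, pow_one]

lemma compat : ∀ g : Hh, fn.comp (φ g).toMonoidHom =
    (MulAut.conj (fh g)).toMonoidHom.comp fn := by
  intro g
  apply zmod_hom_ext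
  have h2 : ∀ z : ZMod 2, z = 0 ∨ z = 1 := by decide
  rcases h2 (Multiplicative.toAdd g) with h | h
  · have hg : g = Multiplicative.ofAdd 0 := by rw [← h]; rfl
    subst hg
    simp only [MonoidHom.comp_apply, MulEquiv.coe_toMonoidHom, ofAdd_zero, map_one,
      MulAut.one_apply, MulAut.conj_apply, one_mul, inv_one, mul_one]
  · have hg : g = Multiplicative.ofAdd 1 := by rw [← h]; rfl
    subst hg
    simp only [MonoidHom.comp_apply, MulEquiv.coe_toMonoidHom, MulAut.conj_apply]
    rw [φ_one, m3_apply, mul_one, fn_one, fh_one]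
    rw [fn, zmodHom_apply, show ((3 : ZMod 8)).val = 3 from rfl]
    rw [← hτinv, inv_inv, hconj]

def fromSDP : SemidirectProduct Nn Hh φ →* P := SemidirectProduct.lift fn fh compat

def gens : Bool → SemidirectProduct Nn Hh φ := fun b =>
  if b then SemidirectProduct.inl (Multiplicative.ofAdd (1 : ZMod 8))
  else SemidirectProduct.inr (Multiplicative.ofAdd (1 : ZMod 2))

lemma gens_rels : ∀ r ∈ rels, FreeGroup.lift gens r = 1 := by
  intro r hr
  rcases hr with h | h
  · subst h
    rw [map_pow, FreeGroup.lift_apply_of, show gens false =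
      SemidirectProduct.inr (Multiplicative.ofAdd (1 : ZMod 2)) from rfl, ← map_pow,
      show (Multiplicative.ofAdd (1 : ZMod 2)) ^ 2 = 1 by decide, map_one]
  · rw [Set.mem_singleton_iff] at h
    subst h
    simp only [map_mul, map_inv, map_pow, FreeGroup.lift_apply_of]
    rw [show gens false = SemidirectProduct.inr (Multiplicative.ofAdd (1 : ZMod 2)) from rfl,
      show gens true = SemidirectProduct.inl (Multiplicative.ofAdd (1 : ZMod 8)) from rfl]
    rw [mul_inv_eq_one, ← map_inv, ← SemidirectProduct.inl_aut_inv]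
    rw [show (φ (Multiplicative.ofAdd (1 : ZMod 2)))⁻¹ =
        φ ((Multiplicative.ofAdd (1 : ZMod 2))⁻¹) from (map_inv φ _).symm,
      show (Multiplicative.ofAdd (1 : ZMod 2))⁻¹ = Multiplicative.ofAdd (1 : ZMod 2) by decide,
      φ_one, m3_apply, mul_one, ← map_pow,
      show (Multiplicative.ofAdd (1 : ZMod 8)) ^ 3 = Multiplicative.ofAdd (3 : ZMod 8) by decide]

def toSDP : P →* SemidirectProduct Nn Hh φ := PresentedGroup.toGroup gens_rels

lemma left_comp : fromSDP.comp toSDP = MonoidHom.id P := by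
  ext b
  cases b <;>
    simp only [MonoidHom.comp_apply, MonoidHom.id_apply, toSDP, PresentedGroup.toGroup.of, gens,
      if_true, if_false, Bool.false_eq_true, fromSDP, SemidirectProduct.lift_inl,
      SemidirectProduct.lift_inr, fn_one, fh_one]
  · rfl
  · rfl

lemma right_comp : toSDP.comp fromSDP = MonoidHom.id _ := by
  apply SemidirectProduct.hom_ext
  · rw [MonoidHom.comp_assoc]
    apply zmod_hom_ext
    simp only [MonoidHom.comp_apply, SemidirectProduct.lift_comp_inl, fromSDP,
      SemidirectProduct.lift_inl, fn_one, MonoidHom.id_comp]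
    rw [show (σ : P) = PresentedGroup.of true from rfl, toSDP, PresentedGroup.toGroup.of]
    rfl
  · rw [MonoidHom.comp_assoc]
    apply zmod_hom_ext
    simp only [MonoidHom.comp_apply, fromSDP, SemidirectProduct.lift_inr, MonoidHom.id_comp]
    rw [fh_one, show (τ : P) = PresentedGroup.of false from rfl, toSDP, PresentedGroup.toGroup.of]
    rfl

def iso : P ≃* SemidirectProduct Nn Hh φ := MonoidHom.toMulEquiv toSDP fromSDP left_comp right_comp

def prodEquiv : SemidirectProduct Nn Hh φ ≃ Nn × Hh where
  toFun x := (x.left, x.right)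
  invFun p := ⟨p.1, p.2⟩
  left_inv x := rfl
  right_inv p := rfl

lemma finP : Finite P := Finite.of_equiv _ (iso.toEquiv.trans prodEquiv).symm

lemma cardP : Nat.card P = 16 := by
  rw [Nat.card_congr (iso.toEquiv.trans prodEquiv), Nat.card_prod,
    Nat.card_eq_fintype_card, Nat.card_eq_fintype_card]
  rfl

end Stmt11Aux


/-- The presented group `⟨σ, τ | τ² = 1, τ⁻¹στ = σ³⟩` is isomorphic to the semidirect
product `(ℤ/8) ⋊ (ℤ/2)` where the generator `1` of `ℤ/2` acts by multiplication by `3`;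
in particular it is finite of cardinality 16. Here `σ` is the generator indexed by
`true` and `τ` the generator indexed by `false`. -/
theorem stmt_11 :
    ∃ φ : Multiplicative (ZMod 2) →* MulAut (Multiplicative (ZMod 8)),
      (∀ a : ZMod 8,
        φ (Multiplicative.ofAdd (1 : ZMod 2)) (Multiplicative.ofAdd a) =
          Multiplicative.ofAdd (3 * a)) ∧
      Nonempty (PresentedGroup
        ({FreeGroup.of false ^ 2,
          (FreeGroup.of false)⁻¹ * FreeGroup.of true * FreeGroup.of false *
            (FreeGroup.of true ^ 3)⁻¹} : Set (FreeGroup Bool)) ≃*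
        SemidirectProduct (Multiplicative (ZMod 8)) (Multiplicative (ZMod 2)) φ) ∧
      Finite (PresentedGroup
        ({FreeGroup.of false ^ 2,
          (FreeGroup.of false)⁻¹ * FreeGroup.of true * FreeGroup.of false *
            (FreeGroup.of true ^ 3)⁻¹} : Set (FreeGroup Bool))) ∧
      Nat.card (PresentedGroup
        ({FreeGroup.of false ^ 2,
          (FreeGroup.of false)⁻¹ * FreeGroup.of true * FreeGroup.of false *
            (FreeGroup.of true ^ 3)⁻¹} : Set (FreeGroup Bool))) = 16 := by
  exact ⟨Stmt11Aux.φ, fun a => by rw [Stmt11Aux.φ_one, Stmt11Aux.m3_apply],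
    ⟨Stmt11Aux.iso⟩, Stmt11Aux.finP, Stmt11Aux.cardP⟩
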